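/- Let $t\geq 2$ and for $1\leq i,j\leq t-1$ set $b_{i,j} = \binom{2j}{2i} - \binom{2j}{2t-2i}$ (with $\binom{n}{k}=0$ if $k>n$ or $k<0$). Then for every $j$ with $1\leq j\leq t-1$, $\sum_{i=1}^{t-1} |b_{i,j}| < 2^{2j+1} - 1$. -/

import Mathlib

open Finset

lemma sumB (n : ℕ) (S : Finset ℕ) (g : ℕ → ℕ) (hg : Set.InjOn g S)
    (h1 : ∀ i ∈ S, g i ≠ 0) :
    ∑ i ∈ S, ((n.choose (g i)) : ℤ) ≤ 2 ^ n - 1 := by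
  classical
  have key : ∑ i ∈ S.filter (fun i => g i ≤ n), ((n.choose (g i)) : ℤ)
      = ∑ i ∈ S, ((n.choose (g i)) : ℤ) := by
    apply Finset.sum_filter_of_ne
    intro i hi hne
    by_contra h
    exact hne (by simp [Nat.choose_eq_zero_of_lt (Nat.lt_of_not_le h)])
  rw [← key]
  have himg : ∑ i ∈ S.filter (fun i => g i ≤ n), ((n.choose (g i)) : ℤ)
      = ∑ k ∈ (S.filter (fun i => g i ≤ n)).image g, ((n.choose k) : ℤ) :=
    (Finset.sum_image (f := fun k => ((n.choose k : ℤ))) (fun a ha b hb hab =>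
      hg (Finset.mem_of_mem_filter a ha) (Finset.mem_of_mem_filter b hb) hab)).symm
  rw [himg]
  have hsub : (S.filter (fun i => g i ≤ n)).image g ⊆ Finset.Icc 1 n := by
    intro k hk
    simp only [Finset.mem_image, Finset.mem_filter] at hk
    obtain ⟨i, ⟨hiS, hle⟩, rfl⟩ := hk
    exact Finset.mem_Icc.mpr ⟨Nat.one_le_iff_ne_zero.mpr (h1 i hiS), hle⟩
  calc (∑ k ∈ (S.filter (fun i => g i ≤ n)).image g, ((n.choose k) : ℤ))
      ≤ ∑ k ∈ Finset.Icc 1 n, ((n.choose k) : ℤ) :=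
        Finset.sum_le_sum_of_subset_of_nonneg hsub (fun _ _ _ => by positivity)
    _ = 2 ^ n - 1 := by
        have hins : insert 0 (Finset.Icc 1 n) = Finset.range (n + 1) := by
          ext x; simp [Finset.mem_Icc, Finset.mem_range]; omega
        have hsum : ∑ k ∈ Finset.range (n + 1), ((n.choose k) : ℤ) = 2 ^ n := by
          have := Nat.sum_range_choose n
          exact_mod_cast congrArg (Nat.cast : ℕ → ℤ) this
        rw [← hins, Finset.sum_insert (by simp)] at hsum
        simp only [Nat.choose_zero_right, Nat.cast_one] at hsum
        linarith

theorem stmt_3 (t : ℕ) (ht : 2 ≤ t) (j : ℕ) (hj : 1 ≤ j) (hj' : j ≤ t - 1) :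
    ∑ i ∈ Finset.Icc 1 (t - 1),
        |(Nat.choose (2 * j) (2 * i) : ℤ) - (Nat.choose (2 * j) (2 * t - 2 * i) : ℤ)|
      < 2 ^ (2 * j + 1) - 1 := by
  have hstep : ∑ i ∈ Finset.Icc 1 (t - 1),
        |(Nat.choose (2 * j) (2 * i) : ℤ) - (Nat.choose (2 * j) (2 * t - 2 * i) : ℤ)|
      ≤ ∑ i ∈ Finset.Icc 1 (t - 1), ((Nat.choose (2 * j) (2 * i) : ℤ)
          + (Nat.choose (2 * j) (2 * t - 2 * i) : ℤ)) := by
    apply Finset.sum_le_sum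
    intro i _
    calc |(Nat.choose (2 * j) (2 * i) : ℤ) - (Nat.choose (2 * j) (2 * t - 2 * i) : ℤ)|
        ≤ |(Nat.choose (2 * j) (2 * i) : ℤ)| + |(Nat.choose (2 * j) (2 * t - 2 * i) : ℤ)| :=
          abs_sub _ _
      _ = _ := by rw [abs_of_nonneg (by positivity), abs_of_nonneg (by positivity)]
  rw [Finset.sum_add_distrib] at hstep
  have h1 : ∑ i ∈ Finset.Icc 1 (t - 1), ((Nat.choose (2 * j) (2 * i)) : ℤ)
      ≤ 2 ^ (2 * j) - 1 := by
    apply sumB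
    · intro a ha b hb hab
      simp only [Finset.coe_Icc, Set.mem_Icc] at ha hb
      try dsimp only at hab
      omega
    · intro i hi
      simp only [Finset.mem_Icc] at hi
      omega
  have h2 : ∑ i ∈ Finset.Icc 1 (t - 1), ((Nat.choose (2 * j) (2 * t - 2 * i)) : ℤ)
      ≤ 2 ^ (2 * j) - 1 := by
    apply sumB
    · intro a ha b hb hab
      simp only [Finset.coe_Icc, Set.mem_Icc] at ha hb
      try dsimp only at hab
      omega
    · intro i hi
      simp only [Finset.mem_Icc] at hi
      omega
  have hpow : (2 : ℤ) ^ (2 * j + 1) = 2 * 2 ^ (2 * j) := by ring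
  linarith
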